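/- Let Y be a real random variable with characteristic function φ_Y. Then for all C > 0 and Δ > 0, P(|Y| > C) ≤ (1/Δ)·(1 + 2π/(CΔ))² · ∫₀^Δ (1 − Re φ_Y(u)) du. -/

import Mathlib

open MeasureTheory Real intervalIntegral

lemma sin_key {t : ℝ} (ht : 0 < t) : (t + 2*π)^2 * Real.sin t ≤ 4*π*t*(t+π) := by
  have hpi1 : (3.141592 : ℝ) < π := pi_gt_d6
  have hpi2 : π < 3.141593 := pi_lt_d6
  rcases le_or_gt t 1 with h1 | h1
  · have habs : |t| ≤ 1 := by rw [abs_of_pos ht]; exact h1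
    have hb := Real.sin_bound habs
    rw [abs_of_pos ht] at hb
    have hs : Real.sin t ≤ t - t^3/6 + t^4 * (5/96) := by
      have := (abs_le.mp hb).2
      have h5 : t^5 ≤ t^4 := by
        calc t^5 = t^4 * t := by ring
          _ ≤ t^4 * 1 := mul_le_mul_of_nonneg_left h1 (pow_nonneg ht.le 4)
          _ = t^4 := by ring
      linarith [pow_nonneg ht.le 4]
    have h4 : (t + 2*π)^2 * Real.sin t ≤ (t + 2*π)^2 * (t - t^3/6 + t^4 * (5/96)) :=
      mul_le_mul_of_nonneg_left hs (sq_nonneg _)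
    have e2 : (2*π)^2 ≤ (t + 2*π)^2 := by nlinarith
    have e3 : (1:ℝ) ≤ (1/6 - 5*t/96) * (t + 2*π)^2 := by nlinarith
    have e4 : (0:ℝ) ≤ t^3 * ((1/6 - 5*t/96) * (t + 2*π)^2 - 1) :=
      mul_nonneg (le_of_lt (pow_pos ht 3)) (by linarith)
    nlinarith [h4, e4]
  · rcases le_or_gt t (21/20) with h2 | h2
    · have hs1 : Real.sin 1 ≤ 85/96 := by
        have hb := Real.sin_bound (by norm_num : |(1:ℝ)| ≤ 1)
        have := (abs_le.mp hb).2; norm_num at this ⊢; linarith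
      have hdiff : Real.sin t - Real.sin 1 ≤ t - 1 := by
        rw [Real.sin_sub_sin]
        have h5 : Real.sin ((t - 1)/2) ≤ (t - 1)/2 := Real.sin_le (by linarith)
        have h6 : 0 ≤ Real.sin ((t - 1)/2) :=
          Real.sin_nonneg_of_nonneg_of_le_pi (by linarith) (by linarith)
        have h7 : Real.cos ((t + 1)/2) ≤ 1 := Real.cos_le_one _
        nlinarith [Real.neg_one_le_cos ((t+1)/2)]
      have hs : Real.sin t ≤ 85/96 + (t - 1) := by linarith
      have h4 : (t + 2*π)^2 * Real.sin t ≤ (t + 2*π)^2 * (85/96 + (t - 1)) :=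
        mul_le_mul_of_nonneg_left hs (sq_nonneg _)
      nlinarith [h4, sq_nonneg (t-1),
        mul_nonneg (show (0:ℝ) ≤ t-1 by linarith) (show (0:ℝ) ≤ 21/20 - t by linarith)]
    · have hs0 : (0:ℝ) ≤ t - 21/20 := by linarith
      have hp2 : (9.8696:ℝ) < π^2 := by nlinarith
      have hq : (t + 2*π)^2 ≤ 4*π*t*(t+π) := by
        nlinarith [mul_nonneg hs0 hs0,
          mul_nonneg (mul_nonneg hs0 hs0) (show (0:ℝ) ≤ π - 3.141592 by linarith),
          mul_nonneg hs0 (show (0:ℝ) ≤ π - 3.141592 by linarith),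
          mul_nonneg hs0 (show (0:ℝ) ≤ π^2 - 9.8696 by linarith)]
      have h4 : (t + 2*π)^2 * Real.sin t ≤ (t + 2*π)^2 * 1 :=
        mul_le_mul_of_nonneg_left (Real.sin_le_one t) (sq_nonneg _)
      linarith [h4, hq]

/-- `1 - sin t / t ≥ t²/(t+2π)²` for `t > 0`. -/
lemma sinc_key {t : ℝ} (ht : 0 < t) : t^2/(t+2*π)^2 ≤ 1 - Real.sin t / t := by
  have hsq : (0:ℝ) < (t+2*π)^2 := by positivity
  have hk := sin_key ht
  have h1 : Real.sin t ≤ t - t^3/(t+2*π)^2 := by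
    have hexp : t - t^3/(t+2*π)^2 = (t*(t+2*π)^2 - t^3)/(t+2*π)^2 := by field_simp
    rw [hexp, le_div_iff₀ hsq]
    nlinarith [hk]
  have h2 : Real.sin t / t ≤ 1 - t^2/(t+2*π)^2 := by
    rw [div_le_iff₀ ht]
    have : (1 - t^2/(t+2*π)^2) * t = t - t^3/(t+2*π)^2 := by field_simp
    rw [this]; exact h1
  linarith

/-- monotonicity of `t²/(t+2π)²`. -/
lemma ratio_mono {a t : ℝ} (ha : 0 < a) (hat : a ≤ t) :
    a^2/(a+2*π)^2 ≤ t^2/(t+2*π)^2 := by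
  have hpi := pi_pos
  rw [div_le_div_iff₀ (pow_pos (by linarith) 2) (pow_pos (by linarith) 2)]
  nlinarith [mul_nonneg (show (0:ℝ) ≤ t - a by linarith)
      (show (0:ℝ) ≤ 2*a*t + 2*π*(a+t) by nlinarith),
    mul_pos ha (lt_of_lt_of_le ha hat)]

lemma tail_ptwise {C Δ y : ℝ} (hC : 0 < C) (hΔ : 0 < Δ) (hy : C < |y|) :
    Δ * ((C*Δ)^2/((C*Δ)+2*π)^2) ≤ Δ - Real.sin (Δ*y)/y := by
  have hz : (0:ℝ) < |y| := lt_trans hC hy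
  have hyne : y ≠ 0 := by intro h; rw [h] at hz; simp at hz
  have hsin : Real.sin (Δ*y)/y = Real.sin (Δ*|y|)/|y| := by
    rcases abs_cases y with ⟨h, _⟩ | ⟨h, _⟩
    · rw [h]
    · rw [h, mul_neg, Real.sin_neg, neg_div_neg_eq]
  rw [hsin]
  set z := |y| with hzdef
  have ht : 0 < Δ * z := mul_pos hΔ hz
  have h1 := sinc_key ht
  have h2 : (C*Δ)^2/((C*Δ)+2*π)^2 ≤ (Δ*z)^2/((Δ*z)+2*π)^2 := by
    have : C*Δ ≤ Δ*z := by nlinarith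
    have := ratio_mono (mul_pos hC hΔ) this
    convert this using 3 <;> ring
  have h3 : Real.sin (Δ*z)/z = Δ * (Real.sin (Δ*z)/(Δ*z)) := by
    field_simp
  rw [h3]
  have h4 : (C*Δ)^2/((C*Δ)+2*π)^2 ≤ 1 - Real.sin (Δ*z)/(Δ*z) := le_trans h2 h1
  nlinarith [h4, hΔ]

theorem tail_char_fn_bound {Ω : Type*} [MeasureSpace Ω]
    (μ : Measure Ω) [IsProbabilityMeasure μ] (Y : Ω → ℝ) (hY : Measurable Y)
    (C Δ : ℝ) (hC : 0 < C) (hΔ : 0 < Δ) :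
    (μ {ω | C < |Y ω|}).toReal ≤
      (1 / Δ) * (1 + 2 * Real.pi / (C * Δ)) ^ 2 *
        ∫ u in (0:ℝ)..Δ, (1 - ∫ ω, Real.cos (u * Y ω) ∂μ) := by
  have hpi := pi_pos
  set K : ℝ := (C*Δ)^2/((C*Δ)+2*π)^2 with hKdef
  have hCΔ : 0 < C*Δ := mul_pos hC hΔ
  have hKpos : 0 < K := div_pos (pow_pos hCΔ 2) (pow_pos (by linarith) 2)
  set S : Set Ω := {ω | C < |Y ω|} with hSdef
  have hSm : MeasurableSet S := measurableSet_lt measurable_const hY.abs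
  set ν : Measure ℝ := volume.restrict (Set.Ioc (0:ℝ) Δ) with hνdef
  haveI hνfin : IsFiniteMeasure ν := by
    constructor
    rw [hνdef, Measure.restrict_apply_univ, Real.volume_Ioc]
    exact ENNReal.ofReal_lt_top
  have hmeas : Measurable (fun p : ℝ × Ω => (1:ℝ) - Real.cos (p.1 * Y p.2)) :=
    measurable_const.sub ((measurable_fst.mul (hY.comp measurable_snd)).cos)
  have hint : Integrable (Function.uncurry fun u ω => (1:ℝ) - Real.cos (u * Y ω)) (ν.prod μ) := by
    refine (integrable_const (2:ℝ)).mono' hmeas.aestronglyMeasurable (ae_of_all _ fun p => ?_)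
    show ‖(1:ℝ) - Real.cos (p.1 * Y p.2)‖ ≤ 2
    rw [Real.norm_eq_abs, abs_le]
    constructor <;> nlinarith [Real.cos_le_one (p.1 * Y p.2), Real.neg_one_le_cos (p.1 * Y p.2)]
  set g : Ω → ℝ := fun ω => ∫ u in Set.Ioc (0:ℝ) Δ, (1 - Real.cos (u * Y ω)) with hgdef
  have hgint : Integrable g μ := hint.integral_prod_right
  have hg0 : ∀ ω, 0 ≤ g ω := fun ω =>
    setIntegral_nonneg measurableSet_Ioc fun u _ => by
      nlinarith [Real.cos_le_one (u * Y ω)]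
  -- compute g explicitly for Y ω ≠ 0 and bound it on S
  have hgS : ∀ ω ∈ S, Δ * K ≤ g ω := by
    intro ω hω
    have hy : C < |Y ω| := hω
    have hyne : Y ω ≠ 0 := by
      intro h; rw [h] at hy; simp at hy; linarith
    have hcalc : g ω = Δ - Real.sin (Δ * Y ω) / Y ω := by
      rw [hgdef]
      simp only
      rw [← intervalIntegral.integral_of_le hΔ.le]
      rw [intervalIntegral.integral_sub intervalIntegrable_const
        ((Continuous.intervalIntegrable (by fun_prop) _ _ :
          IntervalIntegrable (fun x : ℝ => Real.cos (x * Y ω)) volume 0 Δ))]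
      rw [intervalIntegral.integral_const]
      rw [intervalIntegral.integral_comp_mul_right (fun x => Real.cos x) hyne]
      rw [integral_cos]
      simp [smul_eq_mul, hyne]
      ring
    rw [hcalc]
    exact tail_ptwise hC hΔ hy
  -- Fubini
  have hswap : ∫ u in Set.Ioc (0:ℝ) Δ, (∫ ω, (1 - Real.cos (u * Y ω)) ∂μ) = ∫ ω, g ω ∂μ :=
    integral_integral_swap hint
  have hI : (∫ u in (0:ℝ)..Δ, (1 - ∫ ω, Real.cos (u * Y ω) ∂μ)) = ∫ ω, g ω ∂μ := by
    rw [intervalIntegral.integral_of_le hΔ.le, ← hswap]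
    refine integral_congr_ae (ae_of_all _ fun u => ?_)
    show 1 - (∫ ω, Real.cos (u * Y ω) ∂μ) = ∫ ω, (1 - Real.cos (u * Y ω)) ∂μ
    have hcos_u : Integrable (fun ω => Real.cos (u * Y ω)) μ := by
      refine (integrable_const (1:ℝ)).mono'
        ((measurable_const.mul hY).cos.aestronglyMeasurable) (ae_of_all _ fun ω => ?_)
      rw [Real.norm_eq_abs]; exact Real.abs_cos_le_one _
    rw [integral_sub (integrable_const 1) hcos_u, MeasureTheory.integral_const, probReal_univ,
      one_smul]
  rw [hI]
  -- integral bound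
  have h5 : Δ * K * (μ S).toReal ≤ ∫ ω, g ω ∂μ := by
    have hc1 : ∫ ω in S, (Δ * K) ∂μ = (μ S).toReal * (Δ * K) := by
      rw [setIntegral_const, smul_eq_mul]; rfl
    calc Δ * K * (μ S).toReal = ∫ ω in S, (Δ * K) ∂μ := by rw [hc1]; ring
      _ ≤ ∫ ω in S, g ω ∂μ :=
          setIntegral_mono_on (integrableOn_const (measure_lt_top μ S).ne)
            hgint.integrableOn hSm hgS
      _ ≤ ∫ ω, g ω ∂μ := setIntegral_le_integral hgint (ae_of_all _ hg0)
  -- transfer constant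
  set I : ℝ := ∫ ω, g ω ∂μ with hIdef
  have hDK : 0 < Δ * K := mul_pos hΔ hKpos
  have hm : (μ S).toReal ≤ I / (Δ * K) := by
    rw [le_div_iff₀ hDK]
    linarith [h5]
  have hne1 : C*Δ + 2*π ≠ 0 := by positivity
  have heq : (1 / Δ) * (1 + 2 * π / (C * Δ)) ^ 2 * I = I / (Δ * K) := by
    rw [hKdef]
    field_simp
  rw [heq]
  exact hm
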